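/- In Blackwell's example, the optimal return from primary state p(n) equals 2^n: for every ε > 0 there is a plan whose expected total return from p(n) exceeds 2^n − ε, while no plan exceeds 2^n. -/

import Mathlib

open MeasureTheory
open scoped ENNReal

/-- States of Blackwell's example: primary states `p n`, secondary states `s n`
(meaningful for `n ≥ 1`), and the terminal state `t`. -/
inductive BS
  | p : ℕ → BS
  | s : ℕ → BS
  | t : BS
  deriving DecidableEq

instance : MeasurableSpace BS := ⊤
instance : Inhabited BS := ⟨BS.t⟩

/-- Actions: `cont` (move to the next primary state or terminal, each w.p. 1/2) and
`switch` (move to the secondary state `s (2^n - 1)`).  In secondary and terminal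
states both actions have the same effect. -/
inductive Act
  | cont : Act
  | switch : Act
  deriving DecidableEq

instance : MeasurableSpace Act := ⊤
instance : Inhabited Act := ⟨Act.cont⟩

/-- Transition law of Blackwell's example. -/
noncomputable def bq : BS → Act → Measure BS
  | .p n, .cont => (1 / 2 : ℝ≥0∞) • Measure.dirac (.p (n + 1)) +
      (1 / 2 : ℝ≥0∞) • Measure.dirac .t
  | .p n, .switch => Measure.dirac (.s (2 ^ n - 1))
  | .s n, _ => Measure.dirac (if n ≤ 1 then .t else .s (n - 1))
  | .t, _ => Measure.dirac .t

/-- Reward function: each step in a secondary state pays 1, all other steps pay 0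
(the income `2^n - 1` of choosing `switch` at `p n` is collected along the
secondary chain `s (2^n - 1) → ⋯ → s 1 → t`). -/
noncomputable def br : BS → Act → BS → ℝ
  | .s _, _, _ => 1
  | _, _, _ => 0

/-- Finite-horizon expected return of a (history-dependent, randomized) plan. -/
noncomputable def finVal {S A : Type*} [MeasurableSpace S] [MeasurableSpace A] [Inhabited S]
    (q : S → A → Measure S) (r : S → A → S → ℝ)
    (π : List S → Measure A) : ℕ → List S → ℝ
  | 0, _ => 0
  | n + 1, h => ∫ a, ∫ y, (r h.headI a y + finVal q r π n (y :: h)) ∂(q h.headI a) ∂(π h)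

/-- Total expected (undiscounted) return `I(π)(s)` of the plan `π` from state `s`. -/
noncomputable def totalReturn {S A : Type*} [MeasurableSpace S] [MeasurableSpace A] [Inhabited S]
    (q : S → A → Measure S) (r : S → A → S → ℝ)
    (π : List S → Measure A) (s : S) : ℝ :=
  ⨆ n : ℕ, finVal q r π n [s]

/-! ### Auxiliary lemmas -/

instance : MeasurableSingletonClass BS := ⟨fun _ => MeasurableSpace.measurableSet_top⟩
instance : MeasurableSingletonClass Act := ⟨fun _ => MeasurableSpace.measurableSet_top⟩

lemma bq_p_cont (n : ℕ) : bq (.p n) .cont = (1 / 2 : ℝ≥0∞) • Measure.dirac (.p (n + 1)) +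
    (1 / 2 : ℝ≥0∞) • Measure.dirac .t := rfl

lemma bq_p_switch (n : ℕ) : bq (.p n) .switch = Measure.dirac (.s (2 ^ n - 1)) := rfl

lemma bq_s (m : ℕ) (a : Act) :
    bq (.s m) a = Measure.dirac (if m ≤ 1 then .t else .s (m - 1)) := by cases a <;> rfl

lemma bq_t (a : Act) : bq .t a = Measure.dirac .t := by cases a <;> rfl

lemma br_p (n : ℕ) (a : Act) (y : BS) : br (.p n) a y = 0 := rfl
lemma br_s (m : ℕ) (a : Act) (y : BS) : br (.s m) a y = 1 := rfl
lemma br_t (a : Act) (y : BS) : br .t a y = 0 := rfl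

lemma bs_integrable_dirac (f : BS → ℝ) (x : BS) : Integrable f (Measure.dirac x) := by
  constructor
  · exact measurable_from_top.stronglyMeasurable.aestronglyMeasurable
  · rw [HasFiniteIntegral, lintegral_dirac]
    exact ENNReal.coe_lt_top

lemma integral_mix (f : BS → ℝ) (x y : BS) :
    ∫ z, f z ∂((1 / 2 : ℝ≥0∞) • Measure.dirac x + (1 / 2 : ℝ≥0∞) • Measure.dirac y)
      = (1 / 2) * f x + (1 / 2) * f y := by
  rw [integral_add_measure ((bs_integrable_dirac f x).smul_measure (by norm_num))
      ((bs_integrable_dirac f y).smul_measure (by norm_num)),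
    integral_smul_measure, integral_smul_measure, integral_dirac, integral_dirac]
  norm_num [ENNReal.toReal_div]

lemma integral_le_const {α : Type*} [MeasurableSpace α] (μ : Measure α)
    [IsProbabilityMeasure μ] (f : α → ℝ) (C : ℝ) (hC : 0 ≤ C) (h : ∀ a, f a ≤ C) :
    ∫ a, f a ∂μ ≤ C := by
  by_cases hf : Integrable f μ
  · calc ∫ a, f a ∂μ ≤ ∫ _, C ∂μ := integral_mono hf (integrable_const C) h
      _ = C := by simp
  · rw [integral_undef hf]; exact hC

/-- The bound function on states. -/
noncomputable def W : BS → ℝ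
  | .p n => 2 ^ n
  | .s m => ((max m 1 : ℕ) : ℝ)
  | .t => 0

lemma W_nonneg (x : BS) : 0 ≤ W x := by
  cases x <;> simp only [W] <;> positivity

lemma finVal_le (π : List BS → Measure Act) (hπ : ∀ h, IsProbabilityMeasure (π h)) :
    ∀ N h, finVal bq br π N h ≤ W h.headI := by
  intro N
  induction N with
  | zero => intro h; simpa [finVal] using W_nonneg h.headI
  | succ N ih =>
    intro h
    rw [finVal]
    haveI := hπ h
    apply integral_le_const _ _ _ (W_nonneg _)
    intro a
    rcases hs : h.headI with n | m | _
    · -- primary state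
      cases a
      · -- cont
        rw [bq_p_cont, integral_mix]
        have h1 := ih (.p (n + 1) :: h)
        have h2 := ih (.t :: h)
        simp only [List.headI, W, br_p] at h1 h2 ⊢
        rw [pow_succ] at h1
        linarith
      · -- switch
        rw [bq_p_switch, integral_dirac]
        have h1 := ih (.s (2 ^ n - 1) :: h)
        simp only [List.headI, W, br_p] at h1 ⊢
        have hb : ((max (2 ^ n - 1) 1 : ℕ) : ℝ) ≤ (2 : ℝ) ^ n := by
          have h2 : (1 : ℕ) ≤ 2 ^ n := Nat.one_le_two_pow
          have h3 : max (2 ^ n - 1) 1 ≤ 2 ^ n := by omega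
          calc ((max (2 ^ n - 1) 1 : ℕ) : ℝ) ≤ ((2 ^ n : ℕ) : ℝ) := by exact_mod_cast h3
            _ = (2 : ℝ) ^ n := by push_cast; ring
        linarith
    · -- secondary state
      rw [bq_s, integral_dirac]
      by_cases hm : m ≤ 1
      · have h1 := ih (.t :: h)
        simp only [hm, if_true, List.headI, W, br_s] at h1 ⊢
        have he : ((max m 1 : ℕ) : ℝ) = 1 := by
          have : max m 1 = 1 := by omega
          rw [this]; norm_num
        rw [he]; linarith
      · have h1 := ih (.s (m - 1) :: h)
        simp only [hm, if_false, List.headI, W, br_s] at h1 ⊢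
        have he : ((max m 1 : ℕ) : ℝ) = 1 + ((max (m - 1) 1 : ℕ) : ℝ) := by
          have : max m 1 = 1 + max (m - 1) 1 := by omega
          rw [this]; push_cast; ring
        rw [he]; linarith
    · -- terminal state
      rw [bq_t, integral_dirac]
      have h1 := ih (.t :: h)
      simp only [List.headI, W, br_t] at h1 ⊢
      linarith

/-- The deterministic plan: continue while the primary index is below `c`, then switch. -/
noncomputable def plan (c : ℕ) : List BS → Measure Act :=
  fun h => Measure.dirac (match h.headI with
    | .p m => if m < c then Act.cont else Act.switch
    | _ => Act.cont)

lemma plan_prob (c : ℕ) : ∀ h, IsProbabilityMeasure (plan c h) := by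
  intro h; unfold plan; infer_instance

lemma plan_t (c : ℕ) (h : List BS) (hh : h.headI = .t) :
    plan c h = Measure.dirac Act.cont := by
  unfold plan; rw [hh]

lemma plan_s (c : ℕ) (m : ℕ) (h : List BS) (hh : h.headI = .s m) :
    plan c h = Measure.dirac Act.cont := by
  unfold plan; rw [hh]

lemma plan_p_lt (c : ℕ) (m : ℕ) (h : List BS) (hh : h.headI = .p m) (hm : m < c) :
    plan c h = Measure.dirac Act.cont := by
  unfold plan; rw [hh]; simp [hm]

lemma plan_p_ge (c : ℕ) (m : ℕ) (h : List BS) (hh : h.headI = .p m) (hm : ¬ m < c) :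
    plan c h = Measure.dirac Act.switch := by
  unfold plan; rw [hh]; simp [hm]

lemma finVal_plan_t (c : ℕ) : ∀ N (h : List BS), h.headI = .t →
    finVal bq br (plan c) N h = 0 := by
  intro N
  induction N with
  | zero => intro h _; rfl
  | succ N ih =>
    intro h hh
    rw [finVal, hh, plan_t c h hh, integral_dirac, bq_t, integral_dirac]
    rw [br_t, ih (.t :: h) rfl]
    norm_num

lemma finVal_plan_s (c : ℕ) : ∀ N m (h : List BS), h.headI = .s m →
    finVal bq br (plan c) N h = ((min N (max m 1) : ℕ) : ℝ) := by
  intro N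
  induction N with
  | zero => intro m h _; simp [finVal]
  | succ N ih =>
    intro m h hh
    rw [finVal, hh, plan_s c m h hh, integral_dirac, bq_s, integral_dirac]
    by_cases hm : m ≤ 1
    · rw [if_pos hm, br_s, finVal_plan_t c N (.t :: h) rfl]
      have hmin : min (N + 1) (max m 1) = 1 := by omega
      rw [hmin]
      norm_num
    · rw [if_neg hm, br_s, ih (m - 1) (.s (m - 1) :: h) rfl]
      have hmin : min (N + 1) (max m 1) = min N (max (m - 1) 1) + 1 := by omega
      rw [hmin]
      push_cast; ring

lemma finVal_plan_p (n k : ℕ) (hn : 1 ≤ n) : ∀ d, d ≤ k → ∀ N (h : List BS),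
    h.headI = .p (n + (k - d)) → d + 2 ^ (n + k) ≤ N →
    finVal bq br (plan (n + k)) N h = ((2 ^ (n + k) - 1 : ℕ) : ℝ) / 2 ^ d := by
  intro d
  induction d with
  | zero =>
    intro _ N h hh hN
    have h2 : 2 ≤ 2 ^ (n + k) := by
      calc 2 = 2 ^ 1 := rfl
        _ ≤ 2 ^ (n + k) := Nat.pow_le_pow_right (by norm_num) (by omega)
    obtain ⟨N', rfl⟩ : ∃ N', N = N' + 1 := ⟨N - 1, by omega⟩
    have hk0 : n + (k - 0) = n + k := by omega
    rw [hk0] at hh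
    rw [finVal, hh, plan_p_ge (n + k) (n + k) h hh (by omega), integral_dirac,
      bq_p_switch, integral_dirac, br_p,
      finVal_plan_s (n + k) N' (2 ^ (n + k) - 1) (.s (2 ^ (n + k) - 1) :: h) rfl]
    have hmin : min N' (max (2 ^ (n + k) - 1) 1) = 2 ^ (n + k) - 1 := by omega
    rw [hmin]
    norm_num
  | succ d ihd =>
    intro hdk N h hh hN
    have hone : 1 ≤ 2 ^ (n + k) := Nat.one_le_two_pow
    obtain ⟨N', rfl⟩ : ∃ N', N = N' + 1 := ⟨N - 1, by omega⟩
    have hlt : n + (k - (d + 1)) < n + k := by omega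
    rw [finVal, hh, plan_p_lt (n + k) _ h hh hlt, integral_dirac, bq_p_cont, integral_mix]
    have hsucc : n + (k - (d + 1)) + 1 = n + (k - d) := by omega
    have hN' : d + 2 ^ (n + k) ≤ N' := by omega
    have h1 : finVal bq br (plan (n + k)) N' (.p (n + (k - (d + 1)) + 1) :: h)
        = ((2 ^ (n + k) - 1 : ℕ) : ℝ) / 2 ^ d := by
      have hh' : (BS.p (n + (k - (d + 1)) + 1) :: h).headI = .p (n + (k - d)) := by
        rw [List.headI, hsucc]
      exact ihd (by omega) N' _ hh' hN'
    have h2 := finVal_plan_t (n + k) N' (.t :: h) rfl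
    rw [br_p, br_p, h1, h2, pow_succ]
    ring

/-- In Blackwell's example the optimal return from the primary state `p n` equals `2^n`:
for every `ε > 0` some plan earns more than `2^n - ε` from `p n`, while no plan earns
more than `2^n`. -/
theorem blackwell_optimal_return_primary :
    ∀ n : ℕ, 1 ≤ n →
      (∀ ε : ℝ, 0 < ε →
        ∃ π : List BS → Measure Act, (∀ h, IsProbabilityMeasure (π h)) ∧
          totalReturn bq br π (BS.p n) > 2 ^ n - ε) ∧
      (∀ π : List BS → Measure Act, (∀ h, IsProbabilityMeasure (π h)) →
        totalReturn bq br π (BS.p n) ≤ 2 ^ n) := by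
  intro n hn
  constructor
  · intro ε hε
    obtain ⟨k, hk⟩ : ∃ k : ℕ, (1 / 2 : ℝ) ^ k < ε :=
      exists_pow_lt_of_lt_one hε (by norm_num)
    refine ⟨plan (n + k), plan_prob _, ?_⟩
    have hval : finVal bq br (plan (n + k)) (k + 2 ^ (n + k)) [BS.p n]
        = ((2 ^ (n + k) - 1 : ℕ) : ℝ) / 2 ^ k := by
      apply finVal_plan_p n k hn k le_rfl
      · show BS.p n = BS.p (n + (k - k)); rw [Nat.sub_self, Nat.add_zero]
      · omega
    have hbdd : BddAbove (Set.range fun N => finVal bq br (plan (n + k)) N [BS.p n]) := by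
      refine ⟨2 ^ n, ?_⟩
      rintro _ ⟨N, rfl⟩
      simpa [W] using finVal_le (plan (n + k)) (plan_prob _) N [BS.p n]
    have hle : finVal bq br (plan (n + k)) (k + 2 ^ (n + k)) [BS.p n]
        ≤ totalReturn bq br (plan (n + k)) (BS.p n) := le_ciSup hbdd _
    rw [hval] at hle
    have h1 : (1 : ℕ) ≤ 2 ^ (n + k) := Nat.one_le_two_pow
    have hcast : ((2 ^ (n + k) - 1 : ℕ) : ℝ) / 2 ^ k = 2 ^ n - (1 / 2 : ℝ) ^ k := by
      rw [Nat.cast_sub h1]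
      push_cast
      rw [pow_add]
      field_simp
      have h2k : (2 : ℝ) ^ k * (1 / 2 : ℝ) ^ k = 1 := by rw [← mul_pow]; norm_num
      linear_combination h2k
    rw [hcast] at hle
    have : (0:ℝ) < 2 ^ n := by positivity
    linarith [hk, hle]
  · intro π hπ
    refine ciSup_le fun N => ?_
    simpa [W] using finVal_le π hπ N [BS.p n]
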